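/- Let p ∈ ℕ with p ≥ 1, let m ∈ ℕ, and let n, n' be natural numbers with n < 2^m and n' < 2^m. Set B_F = 2^p − 2^{−p}, q := B_F · interleave(sbin_m(n), 1_m) ∈ ℝ^{2m}, k' := interleave(sbin_m(n'), −1_m) ∈ ℝ^{2m}, and let v := max(−B_F, min(B_F, ⟨q, k'⟩)) be the exact inner product clamped to the interval [−B_F, B_F]. Then round_p(exp(v)) = 1 if n = n', and round_p(exp(v)) = 0 if n ≠ n'. (This is the full conclusion of the positional-encoding lemma: the exponentiated attention score between positions n and n' is 1 exactly when the positions match and 0 otherwise.) -/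

import Mathlib

/-- The binary encoding `bin m n ∈ {0,1}^m` of a natural number `n < 2^m`:
its `i`-th entry is the `i`-th binary digit of `n`. -/
def bin (m n : ℕ) : Fin m → ℝ := fun i => ((n / 2 ^ i.val) % 2 : ℕ)

/-- The signed binary encoding `sbin m n ∈ {-1,1}^m`, `sbin m n i = 2 ⬝ bin m n i - 1`. -/
def sbin (m n : ℕ) : Fin m → ℝ := fun i => 2 * bin m n i - 1

/-- The interleaving of two vectors `x, y ∈ ℝ^m` into a vector in `ℝ^{2m}`. -/
def interleave (m : ℕ) (x y : Fin m → ℝ) (i : Fin (2 * m)) : ℝ :=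
  if i.val % 2 = 0 then x ⟨i.val / 2, by have := i.isLt; omega⟩
  else y ⟨i.val / 2, by have := i.isLt; omega⟩

/-- The set of fixed-point numbers of precision `p`:
`F_p = { s·a·2^{-p} : s ∈ {1,-1}, a ∈ ℕ, a ≤ 2^{2p} - 1 }`. -/
def Fp (p : ℕ) : Set ℝ :=
  {x | ∃ (s : ℝ) (a : ℕ), (s = 1 ∨ s = -1) ∧ a ≤ 2 ^ (2 * p) - 1 ∧
    x = s * a * (2 : ℝ) ^ (-(p : ℤ))}

/-- The maximal fixed-point number `B_F = 2^p - 2^{-p}`. -/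
noncomputable def BF (p : ℕ) : ℝ := 2 ^ p - (2 : ℝ) ^ (-(p : ℤ))

/-- `r` is the rounding of `x` to precision `p`: `r ∈ F_p` is closest to `x` among elements
of `F_p`, with ties broken in favor of the element of smaller absolute value. -/
def IsRound (p : ℕ) (x r : ℝ) : Prop :=
  r ∈ Fp p ∧ ∀ y ∈ Fp p, |x - r| < |x - y| ∨ (|x - r| = |x - y| ∧ |r| ≤ |y|)

lemma sum_range_two_mul (f : ℕ → ℝ) (m : ℕ) :
    ∑ i ∈ Finset.range (2*m), f i = ∑ j ∈ Finset.range m, (f (2*j) + f (2*j+1)) := by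
  induction m with
  | zero => simp
  | succ m ih =>
    rw [Finset.sum_range_succ, ← ih, show 2*(m+1) = 2*m+1+1 by ring,
        Finset.sum_range_succ, Finset.sum_range_succ]
    ring_nf

lemma Fp_zero_mem (p : ℕ) : (0:ℝ) ∈ Fp p := ⟨1, 0, Or.inl rfl, by simp, by simp⟩

lemma Fp_one_mem (p : ℕ) (hp : 1 ≤ p) : (1:ℝ) ∈ Fp p := by
  refine ⟨1, 2^p, Or.inl rfl, ?_, ?_⟩
  · have h2 : (2:ℕ) ≤ 2 ^ p := by
      calc (2:ℕ) = 2^1 := rfl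
      _ ≤ 2^p := Nat.pow_le_pow_right (by norm_num) hp
    have h4 : 2 ^ (2*p) = 2^p * 2^p := by rw [two_mul, pow_add]
    have h5 : 2^p * 2 ≤ 2^p * 2^p := Nat.mul_le_mul_left _ h2
    omega
  · push_cast
    rw [zpow_neg, zpow_natCast]
    field_simp

lemma Fp_lb (p : ℕ) (r : ℝ) (hr : r ∈ Fp p) (hne : r ≠ 0) : (2:ℝ) ^ (-(p:ℤ)) ≤ |r| := by
  obtain ⟨s, a, hs, _, rfl⟩ := hr
  have hsa : |s| = 1 := by rcases hs with rfl | rfl <;> simp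
  have hz : (0:ℝ) < (2:ℝ) ^ (-(p:ℤ)) := by positivity
  have ha : a ≠ 0 := by rintro rfl; simp at hne
  have ha1 : (1:ℝ) ≤ (a:ℝ) := by exact_mod_cast Nat.one_le_iff_ne_zero.mpr ha
  rw [abs_mul, abs_mul, hsa, one_mul, abs_of_pos hz, Nat.abs_cast]
  nlinarith

/-- Positional-encoding lemma: with `q = B_F ⬝ interleave(sbin m n, 1)` and
`k' = interleave(sbin m n', -1)`, and `v` the inner product `⟨q, k'⟩` clamped to
`[-B_F, B_F]`, the rounded exponentiated attention score `round_p (exp v)` is `1`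
exactly when `n = n'` and `0` otherwise. -/
theorem rounded_exp_attention_score (p : ℕ) (hp : 1 ≤ p) (m n n' : ℕ)
    (hn : n < 2 ^ m) (hn' : n' < 2 ^ m) (r : ℝ)
    (hr : IsRound p
      (Real.exp (max (-(BF p)) (min (BF p)
        (∑ i, (BF p * interleave m (sbin m n) (fun _ => 1) i) *
          interleave m (sbin m n') (fun _ => -1) i)))) r) :
    (n = n' → r = 1) ∧ (n ≠ n' → r = 0) := by
  have hp1 : (1:ℝ) ≤ (p:ℝ) := by exact_mod_cast hp
  have h2pinv : (2:ℝ) ^ (-(p:ℤ)) ≤ 1/2 := by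
    have h := zpow_le_zpow_right₀ (show (1:ℝ) ≤ 2 by norm_num)
      (show -(p:ℤ) ≤ -1 by omega)
    simpa using h
  have h2p : (2:ℝ) ≤ 2 ^ p := by
    calc (2:ℝ) = 2^1 := by norm_num
    _ ≤ 2^p := by apply pow_le_pow_right₀ (by norm_num) hp
  have hBFpos : 0 < BF p := by unfold BF; linarith
  -- compute the sum
  set F : ℕ → ℝ := fun i => if h : i < 2*m then
      (BF p * interleave m (sbin m n) (fun _ => 1) ⟨i,h⟩) *
        interleave m (sbin m n') (fun _ => -1) ⟨i,h⟩ else 0 with hF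
  have h1 : (∑ i, (BF p * interleave m (sbin m n) (fun _ => 1) i) *
          interleave m (sbin m n') (fun _ => -1) i) = ∑ i ∈ Finset.range (2*m), F i := by
    rw [← Fin.sum_univ_eq_sum_range]
    apply Finset.sum_congr rfl
    intro i _
    simp [hF, i.isLt]
  have h2 : ∀ j (hj : j < m), F (2*j) + F (2*j+1) =
      BF p * (sbin m n ⟨j, hj⟩ * sbin m n' ⟨j, hj⟩ - 1) := by
    intro j hj
    have hj1 : 2*j < 2*m := by omega
    have hj2 : 2*j+1 < 2*m := by omega
    have e1 : (2*j) % 2 = 0 := by omega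
    have e2 : (2*j+1) % 2 = 1 := by omega
    have e3 : (2*j) / 2 = j := by omega
    have e4 : (2*j+1) / 2 = j := by omega
    simp only [hF, dif_pos hj1, dif_pos hj2, interleave, e1, e2, e3, e4]
    norm_num
    ring
  have hsum : (∑ i, (BF p * interleave m (sbin m n) (fun _ => 1) i) *
          interleave m (sbin m n') (fun _ => -1) i) =
      BF p * ∑ j : Fin m, (sbin m n j * sbin m n' j - 1) := by
    rw [h1, sum_range_two_mul, Finset.mul_sum, ← Fin.sum_univ_eq_sum_range
      (fun j => F (2*j) + F (2*j+1)) m]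
    apply Finset.sum_congr rfl
    intro j _
    rw [h2 j.val j.isLt]
  -- term analysis
  have hmul : ∀ j : Fin m, sbin m n j * sbin m n' j =
      if (n / 2 ^ j.val) % 2 = (n' / 2 ^ j.val) % 2 then 1 else -1 := by
    intro j
    simp only [sbin, bin]
    rcases Nat.mod_two_eq_zero_or_one (n / 2 ^ j.val) with h | h <;>
      rcases Nat.mod_two_eq_zero_or_one (n' / 2 ^ j.val) with h' | h' <;>
      simp [h, h'] <;> norm_num
  constructor
  · -- equal case
    rintro rfl
    have hz : (∑ j : Fin m, (sbin m n j * sbin m n j - 1)) = 0 := by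
      apply Finset.sum_eq_zero
      intro j _
      rw [hmul j]
      simp
    rw [hsum, hz, mul_zero, min_eq_right hBFpos.le,
      max_eq_right (by linarith : -(BF p) ≤ 0), Real.exp_zero] at hr
    rcases hr.2 1 (Fp_one_mem p hp) with h | ⟨h, _⟩
    · rw [sub_self, abs_zero] at h
      exact absurd h (not_lt.mpr (abs_nonneg _))
    · have : |1 - r| = 0 := by simpa using h
      have := abs_eq_zero.mp this
      linarith
  · -- unequal case
    intro hne
    obtain ⟨j0, hj0m, hj0⟩ : ∃ j, j < m ∧ (n / 2 ^ j) % 2 ≠ (n' / 2 ^ j) % 2 := by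
      by_contra hc
      push_neg at hc
      apply hne
      apply Nat.eq_of_testBit_eq
      intro i
      rcases lt_or_ge i m with him | him
      · simp only [Nat.testBit_eq_decide_div_mod_eq]
        rw [hc i him]
      · have hle : 2 ^ m ≤ 2 ^ i := Nat.pow_le_pow_right (by norm_num) him
        have : n / 2 ^ i = 0 := Nat.div_eq_of_lt (by omega)
        have : n' / 2 ^ i = 0 := Nat.div_eq_of_lt (by omega)
        simp only [Nat.testBit_eq_decide_div_mod_eq]
        rw [‹n / 2 ^ i = 0›, ‹n' / 2 ^ i = 0›]
    set j0f : Fin m := ⟨j0, hj0m⟩ with hj0f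
    have hSb : (∑ j : Fin m, (sbin m n j * sbin m n' j - 1)) ≤ -2 := by
      have hb : ∀ j : Fin m, sbin m n j * sbin m n' j - 1 ≤
          (if j = j0f then (-2:ℝ) else 0) := by
        intro j
        rw [hmul j]
        split_ifs with hc hj hj
        · exfalso; rw [hj] at hc; exact hj0 hc
        · norm_num
        · norm_num
        · norm_num
      calc (∑ j : Fin m, (sbin m n j * sbin m n' j - 1))
          ≤ ∑ j : Fin m, (if j = j0f then (-2:ℝ) else 0) :=
            Finset.sum_le_sum (fun j _ => hb j)
        _ = -2 := by rw [Finset.sum_ite_eq' Finset.univ j0f (fun _ => (-2:ℝ))]; simp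
    have hS : (∑ i, (BF p * interleave m (sbin m n) (fun _ => 1) i) *
          interleave m (sbin m n') (fun _ => -1) i) ≤ -2 * BF p := by
      rw [hsum]
      nlinarith
    rw [min_eq_right (by nlinarith), max_eq_left (by nlinarith)] at hr
    -- now x = exp (-(BF p))
    set x : ℝ := Real.exp (-(BF p)) with hx
    have hxpos : 0 < x := Real.exp_pos _
    have hxsmall : x < (2:ℝ) ^ (-(p:ℤ)) / 2 := by
      have hlog : Real.log 2 < 0.6931471808 := Real.log_two_lt_d9
      have hlogpos : 0 < Real.log 2 := Real.log_pos (by norm_num)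
      have hBFlb : (p:ℝ) + 1/2 ≤ BF p := by
        have : (p:ℝ) + 1 ≤ 2 ^ p := by
          have hnat : p + 1 ≤ 2^p := Nat.lt_two_pow_self (n := p)
          exact_mod_cast hnat
        unfold BF
        linarith
      have key : ((p:ℝ) + 1) * Real.log 2 < BF p := by nlinarith
      have heq : (2:ℝ) ^ (-(p:ℤ)) / 2 = Real.exp (-(((p:ℝ) + 1) * Real.log 2)) := by
        rw [Real.exp_neg]
        have : ((p:ℝ) + 1) * Real.log 2 = ((p + 1 : ℕ) : ℝ) * Real.log 2 := by push_cast; ring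
        rw [this, Real.exp_nat_mul, Real.exp_log (by norm_num : (0:ℝ) < 2)]
        rw [zpow_neg, zpow_natCast]
        rw [pow_succ]
        field_simp
      rw [heq]
      exact Real.exp_lt_exp.mpr (by linarith)
    rcases hr.2 0 (Fp_zero_mem p) with h | ⟨_, h⟩
    · by_contra hrne
      have hlb := Fp_lb p r hr.1 hrne
      have h1' : |x - r| < x := by
        rwa [sub_zero, abs_of_pos hxpos] at h
      have h2' : |r| - |x| ≤ |x - r| := by
        rw [abs_sub_comm]
        exact abs_sub_abs_le_abs_sub r x
      rw [abs_of_pos hxpos] at h2'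
      linarith
    · simpa using le_antisymm (by simpa using h) (abs_nonneg r)
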